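/- In a subcubic graph G, any two distinct squares are either vertex-disjoint or have exactly one or exactly two edges in common. -/
import Mathlib


open Finset
open scoped Classical

namespace Paper

variable {V : Type*}

/-- `(a, b, c, d)` is a square (cycle of length 4) of `G`. -/
def IsSquare4 (G : SimpleGraph V) (a b c d : V) : Prop :=
  a ≠ b ∧ a ≠ c ∧ a ≠ d ∧ b ≠ c ∧ b ≠ d ∧ c ≠ d ∧
  G.Adj a b ∧ G.Adj b c ∧ G.Adj c d ∧ G.Adj d a

/-- The four native edges of the square `(a, b, c, d)`. -/
def sqEdges [DecidableEq V] (a b c d : V) : Finset (Sym2 V) :=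
  {s(a, b), s(b, c), s(c, d), s(d, a)}

/-- No square of `G` has all four of its native edges in `M`. -/
def SquareFree [DecidableEq V] (G : SimpleGraph V) (M : Finset (Sym2 V)) : Prop :=
  ∀ a b c d : V, IsSquare4 G a b c d → ¬ sqEdges a b c d ⊆ M

/-- The square `(a, b, c, d)` is unproblematic: there is another square `s'`
such that either they share exactly one edge, or they share two edges and
`w(s) ≤ w(s')`. -/
def SqUnprob [DecidableEq V] (G : SimpleGraph V) (w : Sym2 V → ℝ) (a b c d : V) : Prop :=
  ∃ a' b' c' d' : V, IsSquare4 G a' b' c' d' ∧ sqEdges a' b' c' d' ≠ sqEdges a b c d ∧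
    ((sqEdges a b c d ∩ sqEdges a' b' c' d').card = 1 ∨
     ((sqEdges a b c d ∩ sqEdges a' b' c' d').card = 2 ∧
       ∑ e ∈ sqEdges a b c d, w e ≤ ∑ e ∈ sqEdges a' b' c' d', w e))

/-- The square `(a, b, c, d)` is problematic. -/
def ProblemSq [DecidableEq V] (G : SimpleGraph V) (w : Sym2 V → ℝ) (a b c d : V) : Prop :=
  IsSquare4 G a b c d ∧ ¬ SqUnprob G w a b c d

lemma IsSquare4.rotate {G : SimpleGraph V} {a b c d : V}
    (h : IsSquare4 G a b c d) : IsSquare4 G b c d a := by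
  obtain ⟨h1,h2,h3,h4,h5,h6,e1,e2,e3,e4⟩ := h
  exact ⟨h4, h5, h1.symm, h6, h2.symm, h3.symm, e2, e3, e4, e1⟩

lemma card_sqEdges [DecidableEq V] {G : SimpleGraph V} {a b c d : V}
    (h : IsSquare4 G a b c d) : (sqEdges a b c d).card = 4 := by
  obtain ⟨h1,h2,h3,h4,h5,h6,-,-,-,-⟩ := h
  rw [sqEdges]
  rw [card_insert_of_notMem, card_insert_of_notMem, card_insert_of_notMem, card_singleton] <;>
    simp [Sym2.eq_iff] <;> tauto

lemma deg_four {G : SimpleGraph V} [Fintype V] [DecidableEq V] [DecidableRel G.Adj]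
    (hsub : ∀ v : V, G.degree v ≤ 3) (v p q p' q' : V)
    (hp : G.Adj v p) (hq : G.Adj v q) (hp' : G.Adj v p') (hq' : G.Adj v q')
    (hpq : p ≠ q) (h1 : p ≠ p') (h2 : p ≠ q') (h3 : q ≠ p') (h4 : q ≠ q')
    (h5 : p' ≠ q') : False := by
  have hsubn : ({p, q, p', q'} : Finset V) ⊆ G.neighborFinset v := by
    intro x hx
    simp only [mem_insert, mem_singleton] at hx
    rcases hx with rfl|rfl|rfl|rfl <;> simp [SimpleGraph.mem_neighborFinset, *]
  have hcard : ({p, q, p', q'} : Finset V).card = 4 := by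
    rw [card_insert_of_notMem, card_insert_of_notMem, card_insert_of_notMem,
      card_singleton] <;> simp_all
  have := Finset.card_le_card hsubn
  have hd := hsub v
  rw [← SimpleGraph.card_neighborFinset_eq_degree] at hd
  omega

lemma shared_vertex_contra {G : SimpleGraph V} [Fintype V] [DecidableEq V] [DecidableRel G.Adj]
    (hsub : ∀ v : V, G.degree v ≤ 3) (E E' : Finset (Sym2 V))
    (hdisj : ∀ e ∈ E, e ∉ E') (v p q p' q' : V)
    (hp : G.Adj v p) (hq : G.Adj v q) (hpq : p ≠ q)
    (hp' : G.Adj v p') (hq' : G.Adj v q') (hpq' : p' ≠ q')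
    (hpE : s(v,p) ∈ E) (hqE : s(v,q) ∈ E) (hpE' : s(v,p') ∈ E') (hqE' : s(v,q') ∈ E') :
    False := by
  have k1 : p ≠ p' := by rintro rfl; exact hdisj _ hpE hpE'
  have k2 : p ≠ q' := by rintro rfl; exact hdisj _ hpE hqE'
  have k3 : q ≠ p' := by rintro rfl; exact hdisj _ hqE hpE'
  have k4 : q ≠ q' := by rintro rfl; exact hdisj _ hqE hqE'
  exact deg_four hsub v p q p' q' hp hq hp' hq' hpq k1 k2 k3 k4 hpq'

lemma square_vertex_nbrs [DecidableEq V] {G : SimpleGraph V} {a b c d : V}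
    (h : IsSquare4 G a b c d) (v : V) (hv : v ∈ ({a, b, c, d} : Finset V)) :
    ∃ p q, G.Adj v p ∧ G.Adj v q ∧ p ≠ q ∧
      s(v,p) ∈ sqEdges a b c d ∧ s(v,q) ∈ sqEdges a b c d := by
  obtain ⟨h1,h2,h3,h4,h5,h6,e1,e2,e3,e4⟩ := h
  simp only [mem_insert, mem_singleton] at hv
  rcases hv with rfl|rfl|rfl|rfl
  · exact ⟨b, d, e1, e4.symm, h5, by simp [sqEdges], by simp [sqEdges, Sym2.eq_swap]⟩
  · exact ⟨a, c, e1.symm, e2, h2, by simp [sqEdges, Sym2.eq_swap], by simp [sqEdges]⟩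
  · exact ⟨b, d, e2.symm, e3, h5, by simp [sqEdges, Sym2.eq_swap], by simp [sqEdges]⟩
  · exact ⟨c, a, e3.symm, e4, h2.symm, by simp [sqEdges, Sym2.eq_swap], by simp [sqEdges]⟩

set_option maxHeartbeats 1000000 in
lemma fourth_edge [DecidableEq V] {G : SimpleGraph V} {a b c d a' b' c' d' : V}
    (h : IsSquare4 G a b c d) (h' : IsSquare4 G a' b' c' d')
    (h1 : s(a,b) ∈ sqEdges a' b' c' d') (h2 : s(b,c) ∈ sqEdges a' b' c' d')
    (h3 : s(c,d) ∈ sqEdges a' b' c' d') : s(d,a) ∈ sqEdges a' b' c' d' := by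
  obtain ⟨n1,n2,n3,n4,n5,n6,-,-,-,-⟩ := h
  obtain ⟨m1,m2,m3,m4,m5,m6,-,-,-,-⟩ := h'
  simp only [sqEdges, mem_insert, mem_singleton, Sym2.eq_iff] at h1 h2 h3 ⊢
  rcases h1 with (h1|h1|h1|h1) <;> rcases h2 with (h2|h2|h2|h2) <;>
    rcases h3 with (h3|h3|h3|h3) <;>
    rcases h1 with ⟨e1,e2⟩|⟨e1,e2⟩ <;> rcases h2 with ⟨e3,e4⟩|⟨e3,e4⟩ <;>
    rcases h3 with ⟨e5,e6⟩|⟨e5,e6⟩ <;> subst_vars <;> simp_all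

lemma inter_card_le_two [DecidableEq V] {a b c d : V} (E' : Finset (Sym2 V)) (x y : Sym2 V)
    (h : ∀ e ∈ sqEdges a b c d, e ∈ E' → e = x ∨ e = y) :
    (sqEdges a b c d ∩ E').card ≤ 2 := by
  have hs : sqEdges a b c d ∩ E' ⊆ {x, y} := by
    intro e he; rw [mem_inter] at he
    rcases h e he.1 he.2 with rfl|rfl <;> simp
  exact (card_le_card hs).trans ((card_insert_le _ _).trans (by simp))


set_option maxHeartbeats 2000000 in
/-- In a subcubic graph `G`, any two distinct squares are
either vertex-disjoint or have exactly one or exactly two edges in common. -/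
theorem squares_disjoint_or_share_one_or_two_edges {V : Type*} [Fintype V] [DecidableEq V]
    (G : SimpleGraph V) [DecidableRel G.Adj]
    (hsub : ∀ v : V, G.degree v ≤ 3)
    (a b c d a' b' c' d' : V)
    (h : IsSquare4 G a b c d) (h' : IsSquare4 G a' b' c' d')
    (hne : sqEdges a b c d ≠ sqEdges a' b' c' d') :
    Disjoint ({a, b, c, d} : Finset V) ({a', b', c', d'} : Finset V) ∨
    (sqEdges a b c d ∩ sqEdges a' b' c' d').card = 1 ∨
    (sqEdges a b c d ∩ sqEdges a' b' c' d').card = 2 := by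
  have hcS := card_sqEdges h
  have hcS' := card_sqEdges h'
  have hle : (sqEdges a b c d ∩ sqEdges a' b' c' d').card ≤ 4 :=
    le_trans (card_le_card inter_subset_left) (le_of_eq hcS)
  have hcases : (sqEdges a b c d ∩ sqEdges a' b' c' d').card = 0 ∨
      (sqEdges a b c d ∩ sqEdges a' b' c' d').card = 1 ∨
      (sqEdges a b c d ∩ sqEdges a' b' c' d').card = 2 ∨
      (sqEdges a b c d ∩ sqEdges a' b' c' d').card = 3 ∨
      (sqEdges a b c d ∩ sqEdges a' b' c' d').card = 4 := by omega
  rcases hcases with hk|hk|hk|hk|hk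
  · -- no shared edge: show vertex-disjoint
    left
    by_contra hnd
    rw [Finset.not_disjoint_iff] at hnd
    obtain ⟨v, hv, hv'⟩ := hnd
    have hempty : sqEdges a b c d ∩ sqEdges a' b' c' d' = ∅ := card_eq_zero.mp hk
    have hdisj : ∀ e ∈ sqEdges a b c d, e ∉ sqEdges a' b' c' d' := by
      intro e he he'
      have : e ∈ sqEdges a b c d ∩ sqEdges a' b' c' d' := mem_inter.mpr ⟨he, he'⟩
      simp [hempty] at this
    obtain ⟨p, q, hp, hq, hpq, hpE, hqE⟩ := square_vertex_nbrs h v hv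
    obtain ⟨p', q', hp', hq', hpq', hpE', hqE'⟩ := square_vertex_nbrs h' v hv'
    exact shared_vertex_contra hsub _ _ hdisj v p q p' q' hp hq hpq hp' hq' hpq' hpE hqE hpE' hqE'
  · exact Or.inr (Or.inl hk)
  · exact Or.inr (Or.inr hk)
  · -- three shared edges: impossible
    exfalso
    by_cases k1 : s(a,b) ∈ sqEdges a' b' c' d' <;>
    by_cases k2 : s(b,c) ∈ sqEdges a' b' c' d' <;>
    by_cases k3 : s(c,d) ∈ sqEdges a' b' c' d' <;>
    by_cases k4 : s(d,a) ∈ sqEdges a' b' c' d' <;>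
    first
    | (refine hne (Finset.eq_of_subset_of_card_le ?_ (le_of_eq (hcS'.trans hcS.symm)))
       intro e he
       simp only [sqEdges, mem_insert, mem_singleton] at he
       rcases he with rfl|rfl|rfl|rfl <;> assumption)
    | exact k4 (fourth_edge h h' k1 k2 k3)
    | exact k1 (fourth_edge h.rotate h' k2 k3 k4)
    | exact k2 (fourth_edge h.rotate.rotate h' k3 k4 k1)
    | exact k3 (fourth_edge h.rotate.rotate.rotate h' k4 k1 k2)
    | (have hle2 : (sqEdges a b c d ∩ sqEdges a' b' c' d').card ≤ 2 := by
         first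
         | (refine inter_card_le_two _ (s(a,b)) (s(b,c)) ?_
            intro e he hm
            simp only [sqEdges, mem_insert, mem_singleton] at he
            rcases he with rfl|rfl|rfl|rfl <;>
              first
              | exact Or.inl rfl
              | exact Or.inr rfl
              | exact absurd hm k1
              | exact absurd hm k2
              | exact absurd hm k3
              | exact absurd hm k4)
         | (refine inter_card_le_two _ (s(a,b)) (s(c,d)) ?_
            intro e he hm
            simp only [sqEdges, mem_insert, mem_singleton] at he
            rcases he with rfl|rfl|rfl|rfl <;>
              first
              | exact Or.inl rfl
              | exact Or.inr rfl
              | exact absurd hm k1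
              | exact absurd hm k2
              | exact absurd hm k3
              | exact absurd hm k4)
         | (refine inter_card_le_two _ (s(a,b)) (s(d,a)) ?_
            intro e he hm
            simp only [sqEdges, mem_insert, mem_singleton] at he
            rcases he with rfl|rfl|rfl|rfl <;>
              first
              | exact Or.inl rfl
              | exact Or.inr rfl
              | exact absurd hm k1
              | exact absurd hm k2
              | exact absurd hm k3
              | exact absurd hm k4)
         | (refine inter_card_le_two _ (s(b,c)) (s(c,d)) ?_
            intro e he hm
            simp only [sqEdges, mem_insert, mem_singleton] at he
            rcases he with rfl|rfl|rfl|rfl <;>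
              first
              | exact Or.inl rfl
              | exact Or.inr rfl
              | exact absurd hm k1
              | exact absurd hm k2
              | exact absurd hm k3
              | exact absurd hm k4)
         | (refine inter_card_le_two _ (s(b,c)) (s(d,a)) ?_
            intro e he hm
            simp only [sqEdges, mem_insert, mem_singleton] at he
            rcases he with rfl|rfl|rfl|rfl <;>
              first
              | exact Or.inl rfl
              | exact Or.inr rfl
              | exact absurd hm k1
              | exact absurd hm k2
              | exact absurd hm k3
              | exact absurd hm k4)
         | (refine inter_card_le_two _ (s(c,d)) (s(d,a)) ?_
            intro e he hm
            simp only [sqEdges, mem_insert, mem_singleton] at he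
            rcases he with rfl|rfl|rfl|rfl <;>
              first
              | exact Or.inl rfl
              | exact Or.inr rfl
              | exact absurd hm k1
              | exact absurd hm k2
              | exact absurd hm k3
              | exact absurd hm k4)
       omega)
  · -- four shared edges: squares equal
    exfalso
    have e1 : sqEdges a b c d ∩ sqEdges a' b' c' d' = sqEdges a b c d :=
      Finset.eq_of_subset_of_card_le inter_subset_left (by omega)
    have e2 : sqEdges a b c d ∩ sqEdges a' b' c' d' = sqEdges a' b' c' d' :=
      Finset.eq_of_subset_of_card_le inter_subset_right (by omega)
    exact hne (e1.symm.trans e2)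


end Paper
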